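/- Let Ω be a set, let ℓ ≥ 1 be an integer, and let F be an ℓ-dimensional real linear subspace of the space of all functions Ω → ℝ. Let b be a symmetric bilinear form on F that is positive definite. Then the convex hull, in the real vector space of functions Ω → ℝ, of the set { v·v : v ∈ F, b(v,v) = 1 } equals the set of all functions of the form ∑_{i=1}^{ℓ} d_i (v_i·v_i), where d₁, …, d_ℓ are nonnegative reals with ∑_{i=1}^{ℓ} d_i = 1 and (v₁, …, v_ℓ) is a basis of F orthonormal with respect to b (i.e. b(v_i, v_j) = δ_{ij}). Here v·w denotes the pointwise product of functions, so v·v is the pointwise square. -/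

import Mathlib

open scoped RealInnerProductSpace

theorem mixing_key {Ω : Type*} (ℓ : ℕ) (hℓ : 1 ≤ ℓ) (F : Submodule ℝ (Ω → ℝ))
    (hF : Module.finrank ℝ F = ℓ)
    (b : F →ₗ[ℝ] F →ₗ[ℝ] ℝ)
    (hsymm : ∀ v w : F, b v w = b w v)
    (hpos : ∀ v : F, v ≠ 0 → 0 < b v v)
    {ι : Type} [Fintype ι] (c : ι → ℝ) (w : ι → F)
    (hc : ∀ k, 0 ≤ c k) (hcsum : ∑ k, c k = 1) (hw : ∀ k, b (w k) (w k) = 1) :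
    ∃ (d : Fin ℓ → ℝ) (v : Module.Basis (Fin ℓ) ℝ F),
      (∀ i, 0 ≤ d i) ∧ (∑ i, d i = 1) ∧
      (∀ i j, b (v i) (v j) = if i = j then 1 else 0) ∧
      (∑ k, c k • ((w k : Ω → ℝ) * (w k : Ω → ℝ)))
        = ∑ i, d i • ((v i : Ω → ℝ) * (v i : Ω → ℝ)) := by
  classical
  haveI : FiniteDimensional ℝ F := FiniteDimensional.of_finrank_pos (by rw [hF]; omega)
  let core : InnerProductSpace.Core ℝ F :=
  { inner := fun v w => b v w
    conj_inner_symm := fun x y => by simpa using hsymm y x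
    re_inner_nonneg := fun x => by
      rcases eq_or_ne x 0 with rfl | hx
      · simp
      · simpa using (hpos x hx).le
    definite := fun x h => by
      by_contra hx
      exact (hpos x hx).ne' (by simpa using h)
    add_left := fun x y z => by simp
    smul_left := fun x y r => by simp }
  letI : NormedAddCommGroup F := core.toNormedAddCommGroup
  letI : InnerProductSpace ℝ F := InnerProductSpace.ofCore core.toCore
  have hinner : ∀ x y : F, ⟪x, y⟫ = b x y := fun _ _ => rfl
  let T : F →ₗ[ℝ] F := ∑ k, c k • ((LinearMap.toSpanSingleton ℝ F (w k)).comp (b (w k)))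
  have hTapp : ∀ x : F, T x = ∑ k, c k • (b (w k) x) • w k := by
    intro x
    simp [T, LinearMap.sum_apply, LinearMap.toSpanSingleton_apply]
  have hT : T.IsSymmetric := by
    intro x y
    rw [hinner, hinner, hTapp x, hTapp y]
    simp only [map_sum, LinearMap.sum_apply, map_smul, LinearMap.smul_apply, smul_eq_mul]
    refine Finset.sum_congr rfl fun k _ => ?_
    rw [hsymm (w k) y, hsymm x (w k)]
    ring
  let v0 := hT.eigenvectorBasis hF
  let μ := hT.eigenvalues hF
  have heig : ∀ i, T (v0 i) = μ i • v0 i := fun i =>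
    hT.apply_eigenvectorBasis hF i
  have horth : ∀ i j, b (v0 i) (v0 j) = if i = j then 1 else 0 := by
    intro i j
    rw [← hinner]
    exact orthonormal_iff_ite.mp v0.orthonormal i j
  have hval : ∀ i j, (if i = j then μ j else 0)
      = ∑ k, c k * (b (w k) (v0 i) * b (w k) (v0 j)) := by
    intro i j
    have h1 : b (v0 i) (T (v0 j)) = μ j * (if i = j then 1 else 0) := by
      rw [heig, map_smul, smul_eq_mul, horth]
    have h2 : b (v0 i) (T (v0 j)) = ∑ k, c k * (b (w k) (v0 i) * b (w k) (v0 j)) := by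
      rw [hTapp, map_sum]
      refine Finset.sum_congr rfl fun k _ => ?_
      rw [map_smul, map_smul, smul_eq_mul, smul_eq_mul, hsymm (v0 i) (w k)]
      ring
    rw [← h2, h1]
    by_cases h : i = j <;> simp [h]
  have hd0 : ∀ i, 0 ≤ μ i := by
    intro i
    have := hval i i
    rw [if_pos rfl] at this
    rw [this]
    exact Finset.sum_nonneg fun k _ => mul_nonneg (hc k) (mul_self_nonneg _)
  have hdsum : ∑ i, μ i = 1 := by
    have key : ∀ k, ∑ i, b (w k) (v0 i) * b (w k) (v0 i) = 1 := by
      intro k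
      have := v0.sum_inner_mul_inner (w k) (w k)
      simp only [hinner] at this
      rw [← hw k, ← this]
      refine Finset.sum_congr rfl fun i _ => ?_
      rw [hsymm (v0 i) (w k)]
    calc ∑ i, μ i = ∑ i, ∑ k, c k * (b (w k) (v0 i) * b (w k) (v0 i)) := by
          refine Finset.sum_congr rfl fun i _ => ?_
          have := hval i i
          rw [if_pos rfl] at this
          exact this
      _ = ∑ k, c k * ∑ i, b (w k) (v0 i) * b (w k) (v0 i) := by
          rw [Finset.sum_comm]
          exact Finset.sum_congr rfl fun k _ => (Finset.mul_sum _ _ _).symm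
      _ = ∑ k, c k := by
          refine Finset.sum_congr rfl fun k _ => ?_
          rw [key k, mul_one]
      _ = 1 := hcsum
  refine ⟨μ, v0.toBasis, hd0, hdsum, ?_, ?_⟩
  · intro i j
    simpa using horth i j
  · funext x
    have hrep : ∀ u : F, (u : Ω → ℝ) x = ∑ i, b (v0 i) u * (v0 i : Ω → ℝ) x := by
      intro u
      have h := v0.sum_repr' u
      have h2 := congrArg (fun z : F => (z : Ω → ℝ) x) h
      simp only [hinner] at h2
      rw [← h2]
      simp [Finset.sum_apply]
    simp only [Finset.sum_apply, Pi.smul_apply, Pi.mul_apply, smul_eq_mul,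
      OrthonormalBasis.coe_toBasis]
    calc ∑ k, c k * ((w k : Ω → ℝ) x * (w k : Ω → ℝ) x)
        = ∑ k, ∑ i, ∑ j, c k * (b (w k) (v0 i) * b (w k) (v0 j))
            * ((v0 i : Ω → ℝ) x * (v0 j : Ω → ℝ) x) := by
          refine Finset.sum_congr rfl fun k _ => ?_
          rw [hrep (w k), Finset.sum_mul_sum, Finset.mul_sum]
          refine Finset.sum_congr rfl fun i _ => ?_
          rw [Finset.mul_sum]
          refine Finset.sum_congr rfl fun j _ => ?_
          rw [hsymm (v0 i) (w k), hsymm (v0 j) (w k)]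
          ring
      _ = ∑ i, ∑ j, (∑ k, c k * (b (w k) (v0 i) * b (w k) (v0 j)))
            * ((v0 i : Ω → ℝ) x * (v0 j : Ω → ℝ) x) := by
          rw [Finset.sum_comm]
          refine Finset.sum_congr rfl fun i _ => ?_
          rw [Finset.sum_comm]
          refine Finset.sum_congr rfl fun j _ => ?_
          rw [Finset.sum_mul]
      _ = ∑ i, ∑ j, (if i = j then μ j else 0)
            * ((v0 i : Ω → ℝ) x * (v0 j : Ω → ℝ) x) := by
          refine Finset.sum_congr rfl fun i _ => ?_
          refine Finset.sum_congr rfl fun j _ => ?_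
          rw [← hval]
      _ = ∑ i, μ i * ((v0 i : Ω → ℝ) x * (v0 i : Ω → ℝ) x) := by
          refine Finset.sum_congr rfl fun i _ => ?_
          simp [ite_mul]




/-- The mixing lemma: the convex hull of pointwise squares of `b`-unit vectors of an
`ℓ`-dimensional space `F` of functions equals the set of convex combinations
`∑ dᵢ vᵢ²` over `b`-orthonormal bases `(vᵢ)` of `F`. -/
theorem stmt1 {Ω : Type*} (ℓ : ℕ) (hℓ : 1 ≤ ℓ) (F : Submodule ℝ (Ω → ℝ))
    (hF : Module.finrank ℝ F = ℓ)
    (b : F →ₗ[ℝ] F →ₗ[ℝ] ℝ)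
    (hsymm : ∀ v w : F, b v w = b w v)
    (hpos : ∀ v : F, v ≠ 0 → 0 < b v v) :
    convexHull ℝ {g : Ω → ℝ | ∃ v : F, b v v = 1 ∧ g = (v : Ω → ℝ) * (v : Ω → ℝ)}
      = {g : Ω → ℝ | ∃ (d : Fin ℓ → ℝ) (v : Module.Basis (Fin ℓ) ℝ F),
          (∀ i, 0 ≤ d i) ∧ (∑ i, d i = 1) ∧
          (∀ i j, b (v i) (v j) = if i = j then 1 else 0) ∧
          g = ∑ i, d i • ((v i : Ω → ℝ) * (v i : Ω → ℝ))} := by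

  apply Set.Subset.antisymm
  · intro g hg
    rw [mem_convexHull_iff_exists_fintype] at hg
    obtain ⟨ι, _, cw, z, h0, h1, hz, hx⟩ := hg
    choose W hW1 hW2 using hz
    obtain ⟨d, v, hd0, hd1, horth, heq⟩ :=
      mixing_key ℓ hℓ F hF b hsymm hpos cw W h0 h1 hW1
    refine ⟨d, v, hd0, hd1, horth, ?_⟩
    rw [← hx, ← heq]
    exact Finset.sum_congr rfl fun k _ => by rw [hW2 k]
  · rintro g ⟨d, v, hd0, hd1, horth, rfl⟩
    apply (convex_convexHull ℝ _).sum_mem (fun i _ => hd0 i) hd1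
    intro i _
    refine subset_convexHull ℝ _ ⟨v i, ?_, rfl⟩
    simpa using horth i i
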